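/- Let A ∈ {0,1}^{m×n} be the adjacency matrix of a (k,ε,d)-expander graph with k ≥ 2, and let w ∈ {0,1}^m be a partial support of column a_l (supp(w) ⊆ supp(a_l)). If |supp(w)| ≥ 2εd, then for every h ≠ l, supp(w) ⊄ supp(a_h); that is, w originates uniquely from a_l. -/
import Mathlib


/-- A partial support `W` of a column `l` of the adjacency matrix of a
`(k, ε, d)`-expander (`k ≥ 2`) with `|W| ≥ 2 ε d` originates uniquely from that
column: `W` is not contained in the support of any other column. -/
theorem partial_support_unique_origin
    (n m k d : ℕ) (ε : ℝ) (hk : 2 ≤ k)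
    (colSupp : Fin n → Finset (Fin m))
    (hcol : ∀ l : Fin n, (colSupp l).card = d)
    (hexp : ∀ S : Finset (Fin n), S.card ≤ k →
      ((S.biUnion colSupp).card : ℝ) > (1 - ε) * d * S.card)
    (l : Fin n) (W : Finset (Fin m))
    (hW : W ⊆ colSupp l)
    (hWcard : ((W.card : ℝ) ≥ 2 * ε * d)) :
    ∀ h : Fin n, h ≠ l → ¬ (W ⊆ colSupp h) := by
  intro h hne hWh
  have hScard : ({h, l} : Finset (Fin n)).card = 2 := by
    rw [Finset.card_insert_of_notMem (by simpa using hne), Finset.card_singleton]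
  have hSk : ({h, l} : Finset (Fin n)).card ≤ k := by omega
  have hbi : ({h, l} : Finset (Fin n)).biUnion colSupp = colSupp h ∪ colSupp l := by
    simp [Finset.biUnion_insert]
  have hexp2 := hexp {h, l} hSk
  rw [hbi, hScard] at hexp2
  -- card of union
  have hWsub : W ⊆ colSupp h ∩ colSupp l := Finset.subset_inter hWh hW
  have hWle : W.card ≤ (colSupp h ∩ colSupp l).card := Finset.card_le_card hWsub
  have hunion : (colSupp h ∪ colSupp l).card + (colSupp h ∩ colSupp l).card = d + d := by
    rw [Finset.card_union_add_card_inter, hcol h, hcol l]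
  have hc : ((colSupp h ∪ colSupp l).card : ℝ) + (colSupp h ∩ colSupp l).card = d + d := by
    exact_mod_cast congrArg (Nat.cast : ℕ → ℝ) hunion
  have h1 : (2 * ε * d : ℝ) ≤ (colSupp h ∩ colSupp l).card := le_trans hWcard (by exact_mod_cast hWle)
  push_cast at hexp2
  linarith
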